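/- With A_j, B_j and the exponents α_{jk} fixed, for every ε > 0 there exists δ > 0 such that whenever the constants satisfy 0 ≤ β̄_{jk} = β̄_{kj} < δ for all j ≠ k, the algebraic system (∗) admits a solution (t_1,…,t_r) with all t_j > 0 and |t_j − (A_j/B_j)^{1/α}| < ε for every j. In particular, (∗) has a positive solution whenever all β̄_{jk} are small enough. -/

import Mathlib

open Finset ContinuousLinearMap Topology Filter

noncomputable section

/-- The critical Sobolev exponent 2* = 2N/(N-2). -/
def tS (N : ℕ) : ℝ := 2 * N / ((N : ℝ) - 2)

abbrev EE (r : ℕ) : Type := (Fin r → Fin r → ℝ) × (Fin r → ℝ)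

private lemma sum_mul_left' {ι : Type*} (S : Finset ι) (t : ℝ) (f g : ι → ℝ) :
    ∑ k ∈ S, f k * (t * g k) = t * ∑ k ∈ S, f k * g k := by
  rw [Finset.mul_sum]; exact Finset.sum_congr rfl fun k _ => by ring

def Phi2 (r : ℕ) (m : Fin r → ℝ) (c : Fin r → Fin r → ℝ) : EE r →L[ℝ] (Fin r → ℝ) :=
  LinearMap.toContinuousLinearMap
  { toFun := fun p j => m j * p.2 j + ∑ k ∈ univ.filter (· ≠ j), c j k * p.1 j k
    map_add' := by
      intro p q; funext j
      simp [mul_add, Finset.sum_add_distrib]; ring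
    map_smul' := by
      intro t p; funext j
      simp only [Prod.smul_fst, Prod.smul_snd, Pi.smul_apply, smul_eq_mul, RingHom.id_apply]
      rw [sum_mul_left']; ring }

def Phi2Inv (r : ℕ) (m : Fin r → ℝ) (c : Fin r → Fin r → ℝ) : EE r →L[ℝ] EE r :=
  LinearMap.toContinuousLinearMap
  { toFun := fun q => (q.1, fun j =>
      (q.2 j - ∑ k ∈ univ.filter (· ≠ j), c j k * q.1 j k) / m j)
    map_add' := by
      intro p q; ext <;> simp [mul_add, Finset.sum_add_distrib, add_div] <;> ring
    map_smul' := by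
      intro t p
      refine Prod.ext rfl (funext fun j => ?_)
      simp only [Prod.smul_fst, Prod.smul_snd, Pi.smul_apply, smul_eq_mul, RingHom.id_apply]
      rw [sum_mul_left']; ring }

def FwdE (r : ℕ) (m : Fin r → ℝ) (c : Fin r → Fin r → ℝ) (hm : ∀ j, m j ≠ 0) :
    EE r ≃L[ℝ] EE r := by
  refine ContinuousLinearEquiv.equivOfInverse
    ((ContinuousLinearMap.fst ℝ _ _).prod (Phi2 r m c)) (Phi2Inv r m c) ?_ ?_
  · intro p
    simp only [Phi2, Phi2Inv, LinearMap.coe_toContinuousLinearMap', LinearMap.coe_mk,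
      AddHom.coe_mk, ContinuousLinearMap.prod_apply, ContinuousLinearMap.coe_fst']
    refine Prod.ext rfl (funext fun j => ?_)
    dsimp only
    rw [add_sub_cancel_right, mul_div_cancel_left₀ _ (hm j)]
  · intro q
    simp only [Phi2, Phi2Inv, LinearMap.coe_toContinuousLinearMap', LinearMap.coe_mk,
      AddHom.coe_mk, ContinuousLinearMap.prod_apply, ContinuousLinearMap.coe_fst']
    refine Prod.ext rfl (funext fun j => ?_)
    dsimp only
    rw [mul_comm, div_mul_cancel₀ _ (hm j), sub_add_cancel]

lemma coe_FwdE (r : ℕ) (m : Fin r → ℝ) (c : Fin r → Fin r → ℝ) (hm : ∀ j, m j ≠ 0) :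
    (FwdE r m c hm : EE r →L[ℝ] EE r)
      = (ContinuousLinearMap.fst ℝ _ _).prod (Phi2 r m c) := rfl

lemma main_deriv (r N : ℕ) (A B : Fin r → ℝ) (a : Fin r → Fin r → ℝ)
    (tb : Fin r → ℝ) (htb : ∀ j, 0 < tb j) :
    HasStrictFDerivAt (fun p : EE r => (fun j => p.2 j * p.2 j * A j - p.2 j ^ tS N * B j
        + ∑ k ∈ univ.filter (· ≠ j), a j k * p.1 j k * p.2 j ^ a j k * p.2 k ^ a k j : Fin r → ℝ))
      (Phi2 r (fun j => 2 * tb j * A j - tS N * tb j ^ (tS N - 1) * B j)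
        (fun j k => a j k * tb j ^ a j k * tb k ^ a k j))
      ((0, tb) : EE r) := by
  apply hasStrictFDerivAt_pi''
  intro j
  have hp2 : ∀ i : Fin r, HasStrictFDerivAt (fun p : EE r => p.2 i)
      ((ContinuousLinearMap.proj i).comp (ContinuousLinearMap.snd ℝ (Fin r → Fin r → ℝ) (Fin r → ℝ)))
      ((0, tb) : EE r) := fun i => by
        have h := (hasStrictFDerivAt_apply (𝕜 := ℝ) i tb).comp ((0, tb) : EE r)
          (hasStrictFDerivAt_snd (𝕜 := ℝ) (E := Fin r → Fin r → ℝ) (F := Fin r → ℝ) (p := ((0, tb) : EE r)))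
        exact h
  have hp1' : HasStrictFDerivAt (fun p : EE r => p.1 j)
      ((ContinuousLinearMap.proj j).comp (ContinuousLinearMap.fst ℝ (Fin r → Fin r → ℝ) (Fin r → ℝ)))
      ((0, tb) : EE r) := by
        have h := (hasStrictFDerivAt_apply (𝕜 := ℝ) j (0 : Fin r → Fin r → ℝ)).comp
          ((0, tb) : EE r)
          (hasStrictFDerivAt_fst (𝕜 := ℝ) (E := Fin r → Fin r → ℝ) (F := Fin r → ℝ) (p := ((0, tb) : EE r)))
        exact h
  have hp1 : ∀ k : Fin r, HasStrictFDerivAt (fun p : EE r => p.1 j k)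
      ((ContinuousLinearMap.proj k).comp ((ContinuousLinearMap.proj j).comp
        (ContinuousLinearMap.fst ℝ (Fin r → Fin r → ℝ) (Fin r → ℝ))))
      ((0, tb) : EE r) := fun k => by
        have h := (hasStrictFDerivAt_apply (𝕜 := ℝ) k (0 : Fin r → ℝ)).comp ((0, tb) : EE r) hp1'
        exact h
  have hne : ∀ i : Fin r, (((0, tb) : EE r)).2 i ≠ 0 := fun i => ne_of_gt (htb i)
  have t1 := ((hp2 j).mul (hp2 j)).mul_const (A j)
  have t2 := ((hp2 j).rpow_const (p := tS N) (Or.inl (hne j))).mul_const (B j)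
  have t3 := HasStrictFDerivAt.sum (u := univ.filter (· ≠ j))
    (fun k _ => (((hp1 k).const_mul (a j k)).mul
        ((hp2 j).rpow_const (p := a j k) (Or.inl (hne j)))).mul
        ((hp2 k).rpow_const (p := a k j) (Or.inl (hne k))))
  have H := (t1.sub t2).add t3
  replace H := H.congr_of_eventuallyEq (f₁ := fun x : EE r => x.2 j * x.2 j * A j - x.2 j ^ tS N * B j
      + ∑ k ∈ univ.filter (· ≠ j), a j k * x.1 j k * x.2 j ^ a j k * x.2 k ^ a k j)
    (Filter.Eventually.of_forall fun x => by simp [Finset.sum_apply])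
  refine H.congr_fderiv ?_
  refine ContinuousLinearMap.ext fun p => ?_
  simp [Phi2]
  have hS : ∀ S : Finset (Fin r),
      ∑ x ∈ S, tb x ^ a x j * (tb j ^ a j x * (a j x * p.1 j x))
        = ∑ x ∈ S, a j x * tb j ^ a j x * tb x ^ a x j * p.1 j x :=
    fun S => Finset.sum_congr rfl fun k _ => by ring
  rw [hS]; ring

/-- for all sufficiently small nonnegative couplings β̄_{jk}, the
algebraic system (∗) admits a positive solution, close to ((A_j/B_j)^{1/α})_j. -/
theorem stmt9 (N r : ℕ) (hN : 3 ≤ N) (hr : 2 ≤ r)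
    (A B : Fin r → ℝ) (hA : ∀ j, 0 < A j) (hB : ∀ j, 0 < B j)
    (a : Fin r → Fin r → ℝ)
    (ha : ∀ j k, j ≠ k → 1 < a j k)
    (hasum : ∀ j k, j ≠ k → a j k + a k j = tS N) :
    ∀ ε > (0 : ℝ), ∃ δ > (0 : ℝ), ∀ bb : Fin r → Fin r → ℝ,
      (∀ j k, j ≠ k → bb j k = bb k j) →
      (∀ j k, j ≠ k → 0 ≤ bb j k ∧ bb j k < δ) →
      ∃ t : Fin r → ℝ, (∀ j, 0 < t j) ∧
        (∀ j, t j ^ 2 * A j = t j ^ tS N * B j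
            - ∑ k ∈ univ.filter (fun k => k ≠ j),
                a j k * bb j k * t j ^ a j k * t k ^ a k j) ∧
        ∀ j, |t j - (A j / B j) ^ (1 / (tS N - 2))| < ε := by
  intro ε hε
  haveI : NeZero r := ⟨by omega⟩
  have hN3 : (3 : ℝ) ≤ (N : ℝ) := by exact_mod_cast hN
  have hN2 : (0 : ℝ) < (N : ℝ) - 2 := by linarith
  have hs2 : 2 < tS N := by
    rw [tS, lt_div_iff₀ hN2]; linarith
  set tb : Fin r → ℝ := fun j => (A j / B j) ^ (1 / (tS N - 2)) with htbdef
  have htb : ∀ j, 0 < tb j := fun j => Real.rpow_pos_of_pos (div_pos (hA j) (hB j)) _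
  have hkey : ∀ j, tb j ^ (tS N - 2) = A j / B j := by
    intro j
    rw [htbdef]
    rw [← Real.rpow_mul (div_pos (hA j) (hB j)).le, one_div,
      inv_mul_cancel₀ (by linarith : tS N - 2 ≠ 0), Real.rpow_one]
  have hts : ∀ j, tb j ^ tS N * B j = tb j * tb j * A j := by
    intro j
    have h1 : tb j ^ tS N = tb j * tb j * tb j ^ (tS N - 2) := by
      have h2 := Real.rpow_add (htb j) 2 (tS N - 2)
      rw [show (2 : ℝ) + (tS N - 2) = tS N by ring] at h2
      rw [h2, show (2 : ℝ) = ((2 : ℕ) : ℝ) by norm_num, Real.rpow_natCast]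
      ring
    rw [h1, hkey j]
    field_simp [(hB j).ne']
  -- the diagonal coefficients
  set m : Fin r → ℝ := fun j => 2 * tb j * A j - tS N * tb j ^ (tS N - 1) * B j with hmdef
  have hm : ∀ j, m j ≠ 0 := by
    intro j
    have hm1 : tb j ^ (tS N - 1) * B j = tb j * A j := by
      have h2 := Real.rpow_add (htb j) (tS N - 2) 1
      rw [show tS N - 2 + 1 = tS N - 1 by ring] at h2
      rw [h2, Real.rpow_one, hkey j]
      field_simp [(hB j).ne']
    have hmj : m j = (2 - tS N) * (tb j * A j) := by
      rw [hmdef]; dsimp only; rw [mul_assoc (tS N), hm1]; ring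
    rw [hmj]
    exact ne_of_lt (mul_neg_of_neg_of_pos (by linarith) (mul_pos (htb j) (hA j)))
  set c : Fin r → Fin r → ℝ := fun j k => a j k * tb j ^ a j k * tb k ^ a k j with hcdef
  set G : EE r → EE r := fun p => (p.1, (fun j => p.2 j * p.2 j * A j - p.2 j ^ tS N * B j
      + ∑ k ∈ univ.filter (· ≠ j), a j k * p.1 j k * p.2 j ^ a j k * p.2 k ^ a k j : Fin r → ℝ))
    with hGdef
  have hG : HasStrictFDerivAt G
      ((FwdE r m c hm : EE r ≃L[ℝ] EE r) : EE r →L[ℝ] EE r) ((0, tb) : EE r) := by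
    rw [coe_FwdE]
    exact HasStrictFDerivAt.prodMk hasStrictFDerivAt_fst (main_deriv r N A B a tb htb)
  have hG0 : G ((0, tb) : EE r) = 0 := by
    rw [hGdef]
    refine Prod.ext rfl (funext fun j => ?_)
    simp [hts j]
  set g : EE r → EE r := hG.localInverse G (FwdE r m c hm) ((0, tb) : EE r) with hgdef
  -- pick the radius
  have hτpos : (0 : ℝ) < univ.inf' univ_nonempty tb := by
    rw [Finset.lt_inf'_iff]
    exact fun j _ => htb j
  set ε' : ℝ := min ε (univ.inf' univ_nonempty tb) with hε'def
  have hε' : 0 < ε' := lt_min hε hτpos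
  have hev : ∀ᶠ y in 𝓝 (G ((0, tb) : EE r)),
      G (g y) = y ∧ dist (g y) ((0, tb) : EE r) < ε' :=
    hG.eventually_right_inverse.and
      ((Metric.tendsto_nhds.mp hG.localInverse_tendsto) ε' hε')
  rw [hG0] at hev
  obtain ⟨η, hη, hP⟩ := Metric.eventually_nhds_iff.mp hev
  refine ⟨η / 2, by linarith, ?_⟩
  intro bb _ hbb
  classical
  set bb' : Fin r → Fin r → ℝ := fun j k => if j = k then 0 else bb j k with hbb'def
  set y : EE r := (bb', (0 : Fin r → ℝ)) with hydef
  have hy : dist y (0 : EE r) < η := by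
    rw [dist_zero_right, hydef, Prod.norm_def]
    have h1 : ‖bb'‖ < η := by
      rw [pi_norm_lt_iff hη]
      intro j
      rw [pi_norm_lt_iff hη]
      intro k
      rw [Real.norm_eq_abs, hbb'def]
      dsimp only
      by_cases hjk : j = k
      · simp [hjk]; linarith
      · rw [if_neg hjk]
        have := hbb j k hjk
        rw [abs_of_nonneg this.1]
        linarith [this.2]
    simp only [norm_zero]
    exact max_lt h1 hη
  obtain ⟨hGy, hdist⟩ := hP hy
  simp only [hGdef, hydef] at hGy
  rw [Prod.ext_iff] at hGy
  obtain ⟨h1, h2⟩ := hGy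
  refine ⟨(g y).2, ?_, ?_, ?_⟩
  · intro j
    have hdj : dist ((g y).2 j) (tb j) < ε' := by
      refine lt_of_le_of_lt (le_trans (dist_le_pi_dist _ tb j) ?_) hdist
      rw [Prod.dist_eq]
      exact le_max_right _ _
    rw [Real.dist_eq] at hdj
    have h3 : ε' ≤ tb j := le_trans (min_le_right _ _) (Finset.inf'_le tb (mem_univ j))
    have := abs_lt.mp hdj
    linarith
  · intro j
    have h2j := congrFun h2 j
    rw [h1] at h2j
    simp only [Pi.zero_apply] at h2j
    have hsum : ∑ k ∈ univ.filter (fun k => k ≠ j),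
          a j k * bb' j k * (g y).2 j ^ a j k * (g y).2 k ^ a k j
        = ∑ k ∈ univ.filter (fun k => k ≠ j),
          a j k * bb j k * (g y).2 j ^ a j k * (g y).2 k ^ a k j := by
      refine Finset.sum_congr rfl fun k hk => ?_
      have hkj : k ≠ j := by simpa using (Finset.mem_filter.mp hk).2
      rw [hbb'def]
      dsimp only
      rw [if_neg (fun hc => hkj hc.symm)]
    rw [hsum] at h2j
    rw [pow_two]
    linarith
  · intro j
    have hdj : dist ((g y).2 j) (tb j) < ε' := by
      refine lt_of_le_of_lt (le_trans (dist_le_pi_dist _ tb j) ?_) hdist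
      rw [Prod.dist_eq]
      exact le_max_right _ _
    rw [Real.dist_eq] at hdj
    exact lt_of_lt_of_le hdj (min_le_left _ _)
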